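/- For every α > 1 and c > 0 there exists c₁ > 0 such that for every integer N ≥ 0 and all nonnegative reals x₀, x₁, …, x_N: exp(2c·(log(1 + Σ_{i=0}^{N} x_i))^α) ≤ exp(c₁·(log(N+1))^α) · (N+1)^{−1} · Σ_{i=0}^{N} exp(c₁·(log(1 + x_i))^α). -/

import Mathlib

/-- Display (4.16) in the proof of Lemma 4.4 (lecda): for `α > 1` and `c > 0` there is
`c₁ > 0` such that for all `N ∈ ℕ` and nonnegative reals `x₀, …, x_N`,
`exp(2c(log(1 + Σ xᵢ))^α) ≤ exp(c₁(log(N+1))^α) · (N+1)⁻¹ · Σ exp(c₁(log(1+xᵢ))^α)`. -/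
theorem lecda_convexity_bound (α c : ℝ) (hα : 1 < α) (hc : 0 < c) :
    ∃ c₁ : ℝ, 0 < c₁ ∧
      ∀ (N : ℕ) (x : ℕ → ℝ), (∀ i ≤ N, 0 ≤ x i) →
        Real.exp (2 * c * Real.log (1 + ∑ i ∈ Finset.range (N + 1), x i) ^ α)
          ≤ Real.exp (c₁ * Real.log ((N : ℝ) + 1) ^ α) * ((N : ℝ) + 1)⁻¹ *
              ∑ i ∈ Finset.range (N + 1), Real.exp (c₁ * Real.log (1 + x i) ^ α) := by
  have h2 : (0:ℝ) < Real.log 2 := Real.log_pos (by norm_num)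
  set K : ℝ := (Real.log 2) ^ (1 - α) with hKdef
  have hKpos : (0:ℝ) < K := Real.rpow_pos_of_pos h2 _
  have h2α : (0:ℝ) < (2:ℝ) ^ α := Real.rpow_pos_of_pos (by norm_num) _
  set c₂ : ℝ := 2 * c * 2 ^ α with hc₂def
  have hc₂ : 0 < c₂ := by positivity
  refine ⟨c₂ + K, by linarith, ?_⟩
  intro N x hx
  obtain ⟨j, hjmem, hjmax⟩ := Finset.exists_max_image (Finset.range (N+1)) x ⟨0, by simp⟩
  have hj : j ≤ N := Nat.lt_succ_iff.mp (Finset.mem_range.mp hjmem)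
  have hxj : 0 ≤ x j := hx j hj
  set S := ∑ i ∈ Finset.range (N+1), x i with hSdef
  have hS0 : 0 ≤ S :=
    Finset.sum_nonneg fun i hi => hx i (Nat.lt_succ_iff.mp (Finset.mem_range.mp hi))
  have hN0 : (0:ℝ) ≤ (N:ℝ) := Nat.cast_nonneg N
  have hN1 : (1:ℝ) ≤ (N:ℝ) + 1 := by linarith
  set a := Real.log ((N:ℝ) + 1) with hadef
  set b := Real.log (1 + x j) with hbdef
  set L := Real.log (1 + S) with hLdef
  have ha : 0 ≤ a := Real.log_nonneg hN1
  have hb : 0 ≤ b := Real.log_nonneg (by linarith)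
  have hL0 : 0 ≤ L := Real.log_nonneg (by linarith)
  have hSle : S ≤ ((N:ℝ)+1) * x j := by
    have h := Finset.sum_le_card_nsmul (Finset.range (N+1)) x (x j) (fun i hi => hjmax i hi)
    simpa [nsmul_eq_mul, add_comm] using h
  have h1S : (1:ℝ) + S ≤ ((N:ℝ)+1) * (1 + x j) := by nlinarith
  have hL : L ≤ a + b := by
    have hlog := Real.log_le_log (by linarith : (0:ℝ) < 1 + S) h1S
    rwa [Real.log_mul (by linarith) (by linarith)] at hlog
  -- (a+b)^α ≤ 2^α (a^α + b^α)
  have hm : L ≤ 2 * max a b := by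
    have := le_max_left a b; have := le_max_right a b; linarith
  have hchain : L ^ α ≤ 2 ^ α * (a ^ α + b ^ α) := by
    have h1 : L ^ α ≤ (2 * max a b) ^ α :=
      Real.rpow_le_rpow hL0 hm (by linarith)
    have h2' : (2 * max a b) ^ α = 2 ^ α * (max a b) ^ α :=
      Real.mul_rpow (by norm_num) (le_max_of_le_left ha)
    have h3 : (max a b) ^ α ≤ a ^ α + b ^ α := by
      rcases max_cases a b with ⟨h, _⟩ | ⟨h, _⟩ <;> rw [h]
      · nlinarith [Real.rpow_nonneg hb α]
      · nlinarith [Real.rpow_nonneg ha α]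
    calc L ^ α ≤ (2 * max a b) ^ α := h1
      _ = 2 ^ α * (max a b) ^ α := h2'
      _ ≤ 2 ^ α * (a ^ α + b ^ α) := by nlinarith
  have hmain : 2 * c * L ^ α ≤ c₂ * a ^ α + c₂ * b ^ α := by
    have h := mul_le_mul_of_nonneg_left hchain (by linarith : (0:ℝ) ≤ 2 * c)
    calc 2 * c * L ^ α ≤ 2 * c * (2 ^ α * (a ^ α + b ^ α)) := h
      _ = c₂ * a ^ α + c₂ * b ^ α := by rw [hc₂def]; ring
  -- key: a ≤ K * a^α
  have hkey : a ≤ K * a ^ α := by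
    rcases Nat.eq_zero_or_pos N with h0 | hpos
    · have ha0 : a = 0 := by rw [hadef, h0]; norm_num
      rw [ha0, Real.zero_rpow (by linarith : α ≠ 0)]
      norm_num
    · have h2N : (2:ℝ) ≤ (N:ℝ) + 1 := by
        have : (1:ℝ) ≤ (N:ℝ) := by exact_mod_cast hpos
        linarith
      have h2a : Real.log 2 ≤ a := Real.log_le_log (by norm_num) h2N
      have ha0 : 0 < a := lt_of_lt_of_le h2 h2a
      have haa : a * a ^ (α - 1) = a ^ α := by
        nth_rewrite 1 [← Real.rpow_one a]
        rw [← Real.rpow_add ha0]; ring_nf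
      have h4 : (Real.log 2) ^ (α - 1) ≤ a ^ (α - 1) :=
        Real.rpow_le_rpow h2.le h2a (by linarith)
      have h5 : K * (Real.log 2) ^ (α - 1) = 1 := by
        rw [hKdef, ← Real.rpow_add h2]; norm_num
      calc a = K * (Real.log 2) ^ (α - 1) * a := by rw [h5]; ring
        _ ≤ K * a ^ (α - 1) * a := by
            apply mul_le_mul_of_nonneg_right _ ha0.le
            exact mul_le_mul_of_nonneg_left h4 hKpos.le
        _ = K * a ^ α := by rw [← haa]; ring
  have hN1pos : (0:ℝ) < (N:ℝ) + 1 := by linarith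
  have hexp : Real.exp (c₂ * a ^ α + c₂ * b ^ α) * ((N:ℝ) + 1) ≤
      Real.exp ((c₂ + K) * a ^ α + (c₂ + K) * b ^ α) := by
    have hNa : ((N:ℝ) + 1) = Real.exp a := (Real.exp_log hN1pos).symm
    rw [hNa, ← Real.exp_add]
    apply Real.exp_le_exp.mpr
    have hb' : 0 ≤ K * b ^ α := mul_nonneg hKpos.le (Real.rpow_nonneg hb α)
    have hsplit : (c₂ + K) * a ^ α + (c₂ + K) * b ^ α
        = (c₂ * a ^ α + c₂ * b ^ α) + (K * a ^ α + K * b ^ α) := by ring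
    rw [hsplit]
    linarith
  have hsum : Real.exp ((c₂ + K) * b ^ α) ≤
      ∑ i ∈ Finset.range (N+1), Real.exp ((c₂ + K) * Real.log (1 + x i) ^ α) :=
    Finset.single_le_sum (f := fun i => Real.exp ((c₂ + K) * Real.log (1 + x i) ^ α))
      (fun i _ => (Real.exp_pos _).le) hjmem
  calc Real.exp (2 * c * L ^ α)
      ≤ Real.exp (c₂ * a ^ α + c₂ * b ^ α) := Real.exp_le_exp.mpr hmain
    _ = Real.exp (c₂ * a ^ α + c₂ * b ^ α) * ((N:ℝ)+1) * ((N:ℝ)+1)⁻¹ := by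
        field_simp
    _ ≤ Real.exp ((c₂ + K) * a ^ α + (c₂ + K) * b ^ α) * ((N:ℝ)+1)⁻¹ :=
        mul_le_mul_of_nonneg_right hexp (by positivity)
    _ = Real.exp ((c₂ + K) * a ^ α) * ((N:ℝ)+1)⁻¹ * Real.exp ((c₂ + K) * b ^ α) := by
        rw [Real.exp_add]; ring
    _ ≤ Real.exp ((c₂ + K) * a ^ α) * ((N:ℝ)+1)⁻¹ *
          ∑ i ∈ Finset.range (N+1), Real.exp ((c₂ + K) * Real.log (1 + x i) ^ α) :=
        mul_le_mul_of_nonneg_left hsum (by positivity)
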